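/- (Inhomogeneous transference principle, abstract form.) Let X be a locally compact metric space, A and T countable index sets, H and I maps assigning open subsets H_t(α,λ), I_t(α,λ) of X, and Φ a set of functions φ: T → ℝ₊. Let μ be a finite, doubling, non-atomic measure supported on a bounded set S ⊂ X. Suppose (H,I,Φ) satisfies the intersection property (for each φ ∈ Φ there is φ* ∈ Φ with I_t(α,φ(t)) ∩ I_t(α',φ(t)) ⊆ H_t(φ*(t)) for all distinct α, α' and all but finitely many t), and μ is contracting with respect to (I,Φ) (for each φ there exist φ⁺ ∈ Φ and summable (k_t) with covers C_{t,α} of S ∩ I_t(α,φ(t)) by balls B centred in S with S ∩ ∪B ⊆ I_t(α,φ⁺(t)) and μ(5B ∩ I_t(α,φ(t))) ≤ k_t μ(5B)). Then: if μ(limsup_t H_t(φ(t))) = 0 for all φ ∈ Φ, then μ(limsup_t I_t(φ(t))) = 0 for all φ ∈ Φ. -/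

import Mathlib

open scoped BigOperators Classical
open MeasureTheory

noncomputable section

private lemma ball_sub_five {X : Type*} [MetricSpace X] {z w : X} {r ρ : ℝ}
    (h : (Metric.ball z r ∩ Metric.ball w ρ).Nonempty) (hr : r ≤ 2 * ρ) :
    Metric.ball z r ⊆ Metric.ball w (5 * ρ) := by
  obtain ⟨v, hv1, hv2⟩ := h
  rw [Metric.mem_ball] at hv1 hv2
  intro y hy
  rw [Metric.mem_ball] at hy ⊢
  have h1 := dist_triangle4 y z v w
  have h2 : dist z v ≤ dist v z := le_of_eq (dist_comm z v)
  nlinarith [dist_nonneg (x := v) (y := w)]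

/-- The inhomogeneous transference principle (Beresnevich–Velani, abstract form):
if the triple `(H, I, Φ)` satisfies the intersection property and the measure `μ`
is contracting with respect to `(I, Φ)`, then the vanishing of `μ` on all the
homogeneous limsup sets `Λ_H(φ)` implies its vanishing on all the inhomogeneous
limsup sets `Λ_I(φ)`. -/
theorem inhomogeneous_transference_principle
    {X : Type*} [MetricSpace X] [LocallyCompactSpace X] [MeasurableSpace X] [BorelSpace X]
    {A T : Type*} [Countable A] [Countable T]
    (H I : T → A → ℝ → Set X)
    (hHopen : ∀ t α lam, IsOpen (H t α lam))
    (hIopen : ∀ t α lam, IsOpen (I t α lam))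
    (Φ : Set (T → ℝ)) (hΦpos : ∀ φ ∈ Φ, ∀ t, 0 < φ t)
    (μ : Measure X) [IsFiniteMeasure μ] [NullSingletonClass μ]
    (S : Set X) (hSb : Bornology.IsBounded S) (hSfull : μ Sᶜ = 0)
    (hdoubling : ∃ c : ENNReal, 0 < c ∧ c ≠ ⊤ ∧ ∀ x ∈ S, ∀ r : ℝ, 0 < r →
      μ (Metric.ball x (2 * r)) ≤ c * μ (Metric.ball x r))
    (hinter : ∀ φ ∈ Φ, ∃ φ' ∈ Φ,
      {t : T | ¬ ∀ α α' : A, α ≠ α' →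
        I t α (φ t) ∩ I t α' (φ t) ⊆ ⋃ β : A, H t β (φ' t)}.Finite)
    (hcontr : ∀ φ ∈ Φ, ∃ φp ∈ Φ, ∃ k : T → ℝ, (∀ t, 0 < k t) ∧ Summable k ∧
      {t : T | ¬ ∀ α : A, ∃ C : Set (X × ℝ),
        (∀ b ∈ C, b.1 ∈ S ∧ 0 < b.2) ∧
        (S ∩ I t α (φ t) ⊆ ⋃ b ∈ C, Metric.ball b.1 b.2) ∧
        ((S ∩ ⋃ b ∈ C, Metric.ball b.1 b.2) ⊆ I t α (φp t)) ∧
        (∀ b ∈ C, μ (Metric.ball b.1 (5 * b.2) ∩ I t α (φ t)) ≤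
          ENNReal.ofReal (k t) * μ (Metric.ball b.1 (5 * b.2)))}.Finite)
    (hH : ∀ φ ∈ Φ, μ {x : X | {t : T | x ∈ ⋃ α : A, H t α (φ t)}.Infinite} = 0) :
    ∀ φ ∈ Φ, μ {x : X | {t : T | x ∈ ⋃ α : A, I t α (φ t)}.Infinite} = 0 := by
  intro φ hφ
  by_cases hμ0 : μ = 0
  · simp [hμ0]
  -- the doubling constant, normalised to be at least 1
  obtain ⟨c₀, hc₀pos, hc₀top, hdb₀⟩ := hdoubling
  set c : ENNReal := max c₀ 1 with hc
  have hc1 : (1 : ENNReal) ≤ c := le_max_right _ _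
  have hctop : c ≠ ⊤ := by
    have : c < ⊤ := by rw [hc]; exact max_lt hc₀top.lt_top ENNReal.one_lt_top
    exact this.ne
  have hdb : ∀ x ∈ S, ∀ r : ℝ, 0 < r →
      μ (Metric.ball x (2 * r)) ≤ c * μ (Metric.ball x r) :=
    fun x hx r hr => (hdb₀ x hx r hr).trans (mul_le_mul_left (le_max_left _ _) _)
  -- iterated doubling
  have hdbpow : ∀ x ∈ S, ∀ r : ℝ, 0 < r → ∀ n : ℕ,
      μ (Metric.ball x (2 ^ n * r)) ≤ c ^ n * μ (Metric.ball x r) := by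
    intro x hx r hr n
    induction n with
    | zero => simp
    | succ n ih =>
        have h2 : (2 : ℝ) ^ (n + 1) * r = 2 * (2 ^ n * r) := by ring
        rw [h2, pow_succ]
        calc μ (Metric.ball x (2 * (2 ^ n * r)))
            ≤ c * μ (Metric.ball x (2 ^ n * r)) :=
              hdb x hx _ (by positivity)
          _ ≤ c * (c ^ n * μ (Metric.ball x r)) := mul_le_mul_right ih _
          _ = c ^ n * c * μ (Metric.ball x r) := by ring
  have hdb8 : ∀ x ∈ S, ∀ r : ℝ, 0 < r →
      μ (Metric.ball x (8 * r)) ≤ c ^ 3 * μ (Metric.ball x r) := by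
    intro x hx r hr
    have : (8 : ℝ) * r = 2 ^ 3 * r := by norm_num
    rw [this]; exact hdbpow x hx r hr 3
  have hdb5 : ∀ x ∈ S, ∀ r : ℝ, 0 < r →
      μ (Metric.ball x (5 * r)) ≤ c ^ 3 * μ (Metric.ball x r) := by
    intro x hx r hr
    exact le_trans (measure_mono (Metric.ball_subset_ball (by nlinarith))) (hdb8 x hx r hr)
  have hdb4 : ∀ x ∈ S, ∀ r : ℝ, 0 < r →
      μ (Metric.ball x (4 * r)) ≤ c ^ 2 * μ (Metric.ball x r) := by
    intro x hx r hr
    have : (4 : ℝ) * r = 2 ^ 2 * r := by norm_num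
    rw [this]; exact hdbpow x hx r hr 2
  -- balls centred in S have positive measure
  have hballpos : ∀ x ∈ S, ∀ r : ℝ, 0 < r → 0 < μ (Metric.ball x r) := by
    intro x hx r hr
    by_contra h
    push_neg at h
    have h0 : μ (Metric.ball x r) = 0 := le_antisymm h (zero_le)
    have hn : ∀ n : ℕ, μ (Metric.ball x (2 ^ n * r)) = 0 := by
      intro n
      refine le_antisymm ?_ (zero_le)
      calc μ (Metric.ball x (2 ^ n * r)) ≤ c ^ n * μ (Metric.ball x r) :=
            hdbpow x hx r hr n
        _ = 0 := by rw [h0, mul_zero]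
    have huniv : (Set.univ : Set X) ⊆ ⋃ n : ℕ, Metric.ball x (2 ^ n * r) := by
      intro y _
      obtain ⟨n, hn'⟩ := pow_unbounded_of_one_lt (dist y x / r) (one_lt_two (α := ℝ))
      refine Set.mem_iUnion.2 ⟨n, ?_⟩
      rw [Metric.mem_ball]
      rw [div_lt_iff₀ hr] at hn'
      linarith
    apply hμ0
    have : μ Set.univ = 0 := by
      refine le_antisymm ?_ (zero_le)
      calc μ Set.univ ≤ μ (⋃ n : ℕ, Metric.ball x (2 ^ n * r)) := measure_mono huniv
        _ ≤ ∑' n : ℕ, μ (Metric.ball x (2 ^ n * r)) := measure_iUnion_le _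
        _ = 0 := by simp [hn]
    exact Measure.measure_univ_eq_zero.1 this
  -- data from the contraction and intersection properties
  obtain ⟨φp, hφpΦ, k, hkpos, hksum, hbad2⟩ := hcontr φ hφ
  obtain ⟨ψ, hψΦ, hbad1⟩ := hinter φp hφpΦ
  -- a measurable full-measure subset of S
  set S₀ : Set X := (toMeasurable μ Sᶜ)ᶜ with hS₀def
  have hS₀meas : MeasurableSet S₀ := (measurableSet_toMeasurable μ Sᶜ).compl
  have hS₀sub : S₀ ⊆ S := by
    intro x hx
    by_contra h
    exact hx (subset_toMeasurable μ Sᶜ h)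
  have hS₀null : μ S₀ᶜ = 0 := by
    rw [hS₀def, compl_compl, measure_toMeasurable]; exact hSfull
  set R₀ : ℝ := Metric.diam S + 1 with hR₀def
  have hR₀pos : 0 < R₀ := by positivity
  -- notation
  set HT : T → Set X := fun t => ⋃ β : A, H t β (ψ t) with hHTdef
  have hHTmeas : ∀ t, MeasurableSet (HT t) :=
    fun t => MeasurableSet.iUnion fun β => (hHopen t β (ψ t)).measurableSet
  set LS : T → Set X := fun t => (S₀ ∩ ⋃ α : A, I t α (φ t)) \ HT t with hLSdef
  set DB : Set X → Set X := fun G => {x | x ∈ S ∧ ∃ ρ : ℝ, 0 < ρ ∧ ρ ≤ 2 * R₀ ∧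
    μ (Metric.ball x ρ) ≤ 2 * c ^ 2 * μ (Metric.ball x ρ ∩ G)} with hDBdef
  -- the maximal-function estimate for DB
  have hDBbound : ∀ G : Set X, MeasurableSet G → μ (DB G) ≤ 2 * c ^ 5 * μ G := by
    intro Gs hGs
    have hchoice : ∀ x : X, ∃ ρ : ℝ, x ∈ DB Gs → 0 < ρ ∧ ρ ≤ 2 * R₀ ∧
        μ (Metric.ball x ρ) ≤ 2 * c ^ 2 * μ (Metric.ball x ρ ∩ Gs) := by
      intro x
      by_cases hx : x ∈ DB Gs
      · obtain ⟨_, ρ, h⟩ := hx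
        exact ⟨ρ, fun _ => h⟩
      · exact ⟨1, fun h => absurd h hx⟩
    choose ρf hρf using hchoice
    obtain ⟨u, huD, hudisj, hucov⟩ := Vitali.exists_disjoint_subfamily_covering_enlargement
      (fun x => Metric.ball x (ρf x)) (DB Gs) ρf 2 one_lt_two
      (fun a ha => ((hρf a ha).1).le) (2 * R₀) (fun a ha => (hρf a ha).2.1)
      (fun a ha => Metric.nonempty_ball.2 (hρf a ha).1)
    have hupos : ∀ b : ↥u, 0 < μ (Metric.ball (b : X) (ρf b)) := fun b =>
      hballpos _ (huD b.2).1 _ (hρf _ (huD b.2)).1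
    have hudisj' : Pairwise (Function.onFun Disjoint fun b : ↥u => Metric.ball (b : X) (ρf b)) :=
      fun i j hij => hudisj i.2 j.2 (Subtype.coe_injective.ne hij)
    have hucount : u.Countable := by
      have h1 := MeasureTheory.Measure.countable_meas_pos_of_disjoint_iUnion
        (μ := μ) (As := fun b : ↥u => Metric.ball (b : X) (ρf b))
        (fun b => measurableSet_ball) hudisj'
      have h2 : {b : ↥u | 0 < μ (Metric.ball (b : X) (ρf b))} = Set.univ :=
        Set.eq_univ_of_forall fun b => hupos b
      rw [h2, Set.countable_univ_iff] at h1
      exact Set.countable_coe_iff.2 h1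
    haveI : Countable ↥u := hucount.to_subtype
    have hcover : DB Gs ⊆ ⋃ b : ↥u, Metric.ball (b : X) (5 * ρf b) := by
      intro x hx
      obtain ⟨b, hbu, hne, hle⟩ := hucov x hx
      exact Set.mem_iUnion.2 ⟨⟨b, hbu⟩, ball_sub_five hne hle (Metric.mem_ball_self (hρf x hx).1)⟩
    calc μ (DB Gs) ≤ μ (⋃ b : ↥u, Metric.ball (b : X) (5 * ρf b)) := measure_mono hcover
      _ ≤ ∑' b : ↥u, μ (Metric.ball (b : X) (5 * ρf b)) := measure_iUnion_le _
      _ ≤ ∑' b : ↥u, 2 * c ^ 5 * μ (Metric.ball (b : X) (ρf b) ∩ Gs) := by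
          refine ENNReal.tsum_le_tsum fun b => ?_
          calc μ (Metric.ball (b : X) (5 * ρf b))
              ≤ c ^ 3 * μ (Metric.ball (b : X) (ρf b)) :=
                hdb5 _ (huD b.2).1 _ (hρf _ (huD b.2)).1
            _ ≤ c ^ 3 * (2 * c ^ 2 * μ (Metric.ball (b : X) (ρf b) ∩ Gs)) :=
                mul_le_mul_right (hρf _ (huD b.2)).2.2 _
            _ = 2 * c ^ 5 * μ (Metric.ball (b : X) (ρf b) ∩ Gs) := by ring
      _ = 2 * c ^ 5 * ∑' b : ↥u, μ (Metric.ball (b : X) (ρf b) ∩ Gs) :=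
          ENNReal.tsum_mul_left
      _ ≤ 2 * c ^ 5 * μ (⋃ b : ↥u, Metric.ball (b : X) (ρf b) ∩ Gs) := by
          refine mul_le_mul_right ?_ _
          exact tsum_meas_le_meas_iUnion_of_disjoint μ
            (fun b => measurableSet_ball.inter hGs)
            (fun i j hij => (hudisj' hij).mono Set.inter_subset_left Set.inter_subset_left)
      _ ≤ 2 * c ^ 5 * μ Gs := by
          refine mul_le_mul_right (measure_mono ?_) _
          exact Set.iUnion_subset fun b => Set.inter_subset_right
  -- the exceptional finite set of indices
  set F : Set T := {t : T | ¬ ∀ α α' : A, α ≠ α' →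
        I t α (φp t) ∩ I t α' (φp t) ⊆ ⋃ β : A, H t β (ψ t)} ∪
      {t : T | ¬ ∀ α : A, ∃ C : Set (X × ℝ),
        (∀ b ∈ C, b.1 ∈ S ∧ 0 < b.2) ∧
        (S ∩ I t α (φ t) ⊆ ⋃ b ∈ C, Metric.ball b.1 b.2) ∧
        ((S ∩ ⋃ b ∈ C, Metric.ball b.1 b.2) ⊆ I t α (φp t)) ∧
        (∀ b ∈ C, μ (Metric.ball b.1 (5 * b.2) ∩ I t α (φ t)) ≤
          ENNReal.ofReal (k t) * μ (Metric.ball b.1 (5 * b.2)))} with hFdef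
  have hFfin : F.Finite := hbad1.union hbad2
  -- the key estimate at each good index
  have hkey : ∀ t ∉ F, μ (LS t \ DB (HT t)) ≤
      (1 + 2 * c ^ 3) * μ Set.univ * ENNReal.ofReal (k t) := by
    intro t htF
    rw [hFdef, Set.mem_union] at htF
    obtain ⟨ht1, ht2⟩ := not_or.1 htF
    have hIint : ∀ α α' : A, α ≠ α' → I t α (φp t) ∩ I t α' (φp t) ⊆ HT t := by
      have h := not_not.1 ht1
      intro α α' hne
      rw [hHTdef]
      exact h α α' hne
    have hctr := not_not.1 ht2
    choose Cc hcS hccov hcsub hck using hctr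
    set Aa : A → Set X := fun α => (S₀ ∩ I t α (φ t)) \ HT t with hAadef
    have hLSsub : LS t \ DB (HT t) ⊆ ⋃ α : A, (Aa α \ DB (HT t)) := by
      intro x hx
      obtain ⟨hxL, hxD⟩ := hx
      obtain ⟨⟨hxS₀, hxI⟩, hxH⟩ := hxL
      obtain ⟨α, hα⟩ := Set.mem_iUnion.1 hxI
      exact Set.mem_iUnion.2 ⟨α, ⟨⟨⟨hxS₀, hα⟩, hxH⟩, hxD⟩⟩
    by_cases hbig : ∃ α, ∃ b ∈ Cc α, R₀ < b.2
    · -- a huge ball covers all of S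
      obtain ⟨α, b, hbC, hbR⟩ := hbig
      have hbS : b.1 ∈ S := (hcS α b hbC).1
      have hbr : 0 < b.2 := (hcS α b hbC).2
      have hSball : S ⊆ Metric.ball b.1 b.2 := by
        intro s hs
        rw [Metric.mem_ball]
        calc dist s b.1 ≤ Metric.diam S := Metric.dist_le_diam_of_mem hSb hs hbS
          _ < R₀ := by rw [hR₀def]; linarith
          _ < b.2 := hbR
      have hSIp : S ⊆ I t α (φp t) :=
        fun s hs => hcsub α ⟨hs, Set.mem_biUnion hbC (hSball hs)⟩
      have hsub : LS t ⊆ Metric.ball b.1 (5 * b.2) ∩ I t α (φ t) := by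
        intro x hx
        obtain ⟨⟨hxS₀, hxI⟩, hxH⟩ := hx
        obtain ⟨α', hα'⟩ := Set.mem_iUnion.1 hxI
        have hxS : x ∈ S := hS₀sub hxS₀
        have hα'eq : α' = α := by
          by_contra hne
          have h1 : x ∈ I t α' (φp t) := hcsub α' ⟨hxS, ?_⟩
          · exact hxH (hIint α' α hne ⟨h1, hSIp hxS⟩)
          · obtain ⟨b', hb'C, hxb'⟩ := Set.mem_iUnion₂.1 (hccov α' ⟨hxS, hα'⟩)
            exact Set.mem_biUnion hb'C hxb'
        subst hα'eq
        exact ⟨Metric.ball_subset_ball (by linarith) (hSball hxS), hα'⟩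
      calc μ (LS t \ DB (HT t)) ≤ μ (Metric.ball b.1 (5 * b.2) ∩ I t α (φ t)) :=
            measure_mono (le_trans Set.diff_subset hsub)
        _ ≤ ENNReal.ofReal (k t) * μ (Metric.ball b.1 (5 * b.2)) := hck α b hbC
        _ ≤ ENNReal.ofReal (k t) * μ Set.univ :=
            mul_le_mul_right (measure_mono (Set.subset_univ _)) _
        _ ≤ (1 + 2 * c ^ 3) * μ Set.univ * ENNReal.ofReal (k t) := by
            rw [mul_comm]
            exact mul_le_mul_left (le_mul_of_one_le_left (zero_le) (le_add_right le_rfl)) _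
    · -- all balls have radius at most R₀
      push_neg at hbig
      set Lb : A → Set (X × ℝ) := fun α =>
        {b ∈ Cc α | ¬ μ (Metric.ball b.1 b.2) ≤
          2 * μ (Metric.ball b.1 b.2 ∩ S₀ ∩ HT t)} with hLbdef
      have hLbC : ∀ α, Lb α ⊆ Cc α := fun α => Set.sep_subset _ _
      have hcovL : ∀ α, Aa α \ DB (HT t) ⊆ ⋃ b ∈ Lb α, Metric.ball b.1 b.2 := by
        intro α x hx
        obtain ⟨hxA, hxD⟩ := hx
        obtain ⟨⟨hxS₀, hxI⟩, hxH⟩ := hxA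
        have hxS : x ∈ S := hS₀sub hxS₀
        obtain ⟨b, hbC, hxb⟩ := Set.mem_iUnion₂.1 (hccov α ⟨hxS, hxI⟩)
        refine Set.mem_iUnion₂.2 ⟨b, ⟨hbC, ?_⟩, hxb⟩
        intro hheavy
        apply hxD
        have hbS : b.1 ∈ S := (hcS α b hbC).1
        have hbr : 0 < b.2 := (hcS α b hbC).2
        have hxb' : dist x b.1 < b.2 := Metric.mem_ball.1 hxb
        refine ⟨hxS, 2 * b.2, by positivity, by
          have := hbig α b hbC; rw [hR₀def] at *; linarith, ?_⟩
        have hsub1 : Metric.ball x (2 * b.2) ⊆ Metric.ball b.1 (4 * b.2) :=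
          Metric.ball_subset_ball' (by linarith)
        have hsub2 : Metric.ball b.1 b.2 ⊆ Metric.ball x (2 * b.2) :=
          Metric.ball_subset_ball' (by rw [dist_comm]; linarith)
        calc μ (Metric.ball x (2 * b.2)) ≤ μ (Metric.ball b.1 (4 * b.2)) :=
              measure_mono hsub1
          _ ≤ c ^ 2 * μ (Metric.ball b.1 b.2) := hdb4 _ hbS _ hbr
          _ ≤ c ^ 2 * (2 * μ (Metric.ball b.1 b.2 ∩ S₀ ∩ HT t)) :=
              mul_le_mul_right hheavy _
          _ = 2 * c ^ 2 * μ (Metric.ball b.1 b.2 ∩ S₀ ∩ HT t) := by ring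
          _ ≤ 2 * c ^ 2 * μ (Metric.ball x (2 * b.2) ∩ HT t) := by
              refine mul_le_mul_right (measure_mono ?_) _
              intro y hy
              exact ⟨hsub2 hy.1.1, hy.2⟩
      have hvit : ∀ α : A, ∃ u ⊆ Lb α,
          (u.PairwiseDisjoint fun b : X × ℝ => Metric.ball b.1 b.2) ∧
          ∀ a ∈ Lb α, ∃ b ∈ u,
            (Metric.ball a.1 a.2 ∩ Metric.ball b.1 b.2).Nonempty ∧ a.2 ≤ 2 * b.2 :=
        fun α => Vitali.exists_disjoint_subfamily_covering_enlargement
          (fun b : X × ℝ => Metric.ball b.1 b.2) (Lb α) (fun b => b.2) 2 one_lt_two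
          (fun a ha => (hcS α a (hLbC α ha)).2.le) R₀ (fun a ha => hbig α a (hLbC α ha))
          (fun a ha => Metric.nonempty_ball.2 (hcS α a (hLbC α ha)).2)
      choose uu huLb hudisj hucov using hvit
      have hudisj' : ∀ α, Pairwise (Function.onFun Disjoint
          fun b : ↥(uu α) => Metric.ball (b : X × ℝ).1 (b : X × ℝ).2) :=
        fun α i j hij => hudisj α i.2 j.2 (Subtype.coe_injective.ne hij)
      have hucnt : ∀ α, (uu α).Countable := by
        intro α
        have h1 := MeasureTheory.Measure.countable_meas_pos_of_disjoint_iUnion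
          (μ := μ) (As := fun b : ↥(uu α) => Metric.ball (b : X × ℝ).1 (b : X × ℝ).2)
          (fun b => measurableSet_ball) (hudisj' α)
        have h2 : {b : ↥(uu α) | 0 < μ (Metric.ball (b : X × ℝ).1 (b : X × ℝ).2)} =
            Set.univ := Set.eq_univ_of_forall fun b =>
          hballpos _ (hcS α _ (hLbC α (huLb α b.2))).1 _ (hcS α _ (hLbC α (huLb α b.2))).2
        rw [h2, Set.countable_univ_iff] at h1
        exact Set.countable_coe_iff.2 h1
      haveI : ∀ α, Countable ↥(uu α) := fun α => (hucnt α).to_subtype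
      have hcov5 : ∀ α, Aa α \ DB (HT t) ⊆
          ⋃ b : ↥(uu α), Metric.ball (b : X × ℝ).1 (5 * (b : X × ℝ).2) ∩ I t α (φ t) := by
        intro α x hx
        have hxI : x ∈ I t α (φ t) := hx.1.1.2
        obtain ⟨a, haL, hxa⟩ := Set.mem_iUnion₂.1 (hcovL α hx)
        obtain ⟨b, hbu, hne, hle⟩ := hucov α a haL
        exact Set.mem_iUnion.2 ⟨⟨b, hbu⟩, ⟨ball_sub_five hne hle hxa, hxI⟩⟩
      have hlight : ∀ α, ∀ b ∈ uu α, μ (Metric.ball (b : X × ℝ).1 (b : X × ℝ).2) ≤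
          2 * μ ((Metric.ball (b : X × ℝ).1 (b : X × ℝ).2 ∩ S₀) \ HT t) := by
        intro α b hb
        have hnh := (huLb α hb).2
        by_contra hcon
        push_neg at hcon hnh
        have e1 : μ (Metric.ball b.1 b.2 ∩ S₀ ∩ HT t) +
            μ ((Metric.ball b.1 b.2 ∩ S₀) \ HT t) = μ (Metric.ball b.1 b.2 ∩ S₀) :=
          measure_inter_add_diff _ (hHTmeas t)
        have e2 : μ (Metric.ball b.1 b.2) ≤ μ (Metric.ball b.1 b.2 ∩ S₀) := by
          calc μ (Metric.ball b.1 b.2) ≤ μ ((Metric.ball b.1 b.2 ∩ S₀) ∪ S₀ᶜ) :=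
              measure_mono (fun y hy => by
                by_cases h : y ∈ S₀
                exacts [Or.inl ⟨hy, h⟩, Or.inr h])
            _ ≤ μ (Metric.ball b.1 b.2 ∩ S₀) + μ S₀ᶜ := measure_union_le _ _
            _ = μ (Metric.ball b.1 b.2 ∩ S₀) := by rw [hS₀null, add_zero]
        have h3 : μ (Metric.ball b.1 b.2) + μ (Metric.ball b.1 b.2) ≤
            2 * μ (Metric.ball b.1 b.2 ∩ S₀ ∩ HT t) +
            2 * μ ((Metric.ball b.1 b.2 ∩ S₀) \ HT t) := by
          have h4 : μ (Metric.ball b.1 b.2) ≤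
              μ (Metric.ball b.1 b.2 ∩ S₀ ∩ HT t) +
              μ ((Metric.ball b.1 b.2 ∩ S₀) \ HT t) := by rw [e1]; exact e2
          calc μ (Metric.ball b.1 b.2) + μ (Metric.ball b.1 b.2)
              ≤ (μ (Metric.ball b.1 b.2 ∩ S₀ ∩ HT t) +
                μ ((Metric.ball b.1 b.2 ∩ S₀) \ HT t)) +
                (μ (Metric.ball b.1 b.2 ∩ S₀ ∩ HT t) +
                μ ((Metric.ball b.1 b.2 ∩ S₀) \ HT t)) := add_le_add h4 h4
            _ = 2 * μ (Metric.ball b.1 b.2 ∩ S₀ ∩ HT t) +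
                2 * μ ((Metric.ball b.1 b.2 ∩ S₀) \ HT t) := by ring
        have h5 : 2 * μ (Metric.ball b.1 b.2 ∩ S₀ ∩ HT t) +
            2 * μ ((Metric.ball b.1 b.2 ∩ S₀) \ HT t) <
            μ (Metric.ball b.1 b.2) + μ (Metric.ball b.1 b.2) :=
          ENNReal.add_lt_add hnh hcon
        exact absurd (lt_of_le_of_lt h3 h5) (lt_irrefl _)
      have hper : ∀ α : A, μ (Aa α \ DB (HT t)) ≤
          2 * c ^ 3 * ENNReal.ofReal (k t) *
          ∑' b : ↥(uu α), μ ((Metric.ball (b : X × ℝ).1 (b : X × ℝ).2 ∩ S₀) \ HT t) := by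
        intro α
        calc μ (Aa α \ DB (HT t))
            ≤ μ (⋃ b : ↥(uu α),
                Metric.ball (b : X × ℝ).1 (5 * (b : X × ℝ).2) ∩ I t α (φ t)) :=
              measure_mono (hcov5 α)
          _ ≤ ∑' b : ↥(uu α),
                μ (Metric.ball (b : X × ℝ).1 (5 * (b : X × ℝ).2) ∩ I t α (φ t)) :=
              measure_iUnion_le _
          _ ≤ ∑' b : ↥(uu α), 2 * c ^ 3 * ENNReal.ofReal (k t) *
                μ ((Metric.ball (b : X × ℝ).1 (b : X × ℝ).2 ∩ S₀) \ HT t) := by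
              refine ENNReal.tsum_le_tsum fun b => ?_
              have hbC : (b : X × ℝ) ∈ Cc α := hLbC α (huLb α b.2)
              calc μ (Metric.ball (b : X × ℝ).1 (5 * (b : X × ℝ).2) ∩ I t α (φ t))
                  ≤ ENNReal.ofReal (k t) *
                    μ (Metric.ball (b : X × ℝ).1 (5 * (b : X × ℝ).2)) := hck α _ hbC
                _ ≤ ENNReal.ofReal (k t) *
                    (c ^ 3 * μ (Metric.ball (b : X × ℝ).1 (b : X × ℝ).2)) :=
                    mul_le_mul_right (hdb5 _ (hcS α _ hbC).1 _ (hcS α _ hbC).2) _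
                _ ≤ ENNReal.ofReal (k t) * (c ^ 3 *
                    (2 * μ ((Metric.ball (b : X × ℝ).1 (b : X × ℝ).2 ∩ S₀) \ HT t))) := by
                    refine mul_le_mul_right (mul_le_mul_right ?_ _) _
                    exact hlight α _ b.2
                _ = 2 * c ^ 3 * ENNReal.ofReal (k t) *
                    μ ((Metric.ball (b : X × ℝ).1 (b : X × ℝ).2 ∩ S₀) \ HT t) := by ring
          _ = 2 * c ^ 3 * ENNReal.ofReal (k t) *
                ∑' b : ↥(uu α), μ ((Metric.ball (b : X × ℝ).1 (b : X × ℝ).2 ∩ S₀) \ HT t) :=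
              ENNReal.tsum_mul_left
      have hglob : ∑' p : Σ α : A, ↥(uu α),
          μ ((Metric.ball (p.2 : X × ℝ).1 (p.2 : X × ℝ).2 ∩ S₀) \ HT t) ≤ μ Set.univ := by
        refine le_trans (tsum_meas_le_meas_iUnion_of_disjoint μ
          (fun p => (measurableSet_ball.inter hS₀meas).diff (hHTmeas t)) ?_)
          (measure_mono (Set.subset_univ _))
        intro p q hpq
        obtain ⟨α, b⟩ := p
        obtain ⟨α', b'⟩ := q
        rcases eq_or_ne α α' with h1 | h1
        · subst h1
          have hbb' : b ≠ b' := fun h => hpq (by rw [h])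
          exact Disjoint.mono (Set.diff_subset.trans Set.inter_subset_left)
            (Set.diff_subset.trans Set.inter_subset_left) (hudisj' α hbb')
        · simp only [Function.onFun]
          rw [Set.disjoint_left]
          intro y hy1 hy2
          have hyS : y ∈ S := hS₀sub hy1.1.2
          have hyIp : y ∈ I t α (φp t) := hcsub α
            ⟨hyS, Set.mem_biUnion (hLbC α (huLb α b.2)) hy1.1.1⟩
          have hyIq : y ∈ I t α' (φp t) := hcsub α'
            ⟨hyS, Set.mem_biUnion (hLbC α' (huLb α' b'.2)) hy2.1.1⟩
          exact hy1.2 (hIint α α' h1 ⟨hyIp, hyIq⟩)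
      calc μ (LS t \ DB (HT t)) ≤ μ (⋃ α : A, (Aa α \ DB (HT t))) := measure_mono hLSsub
        _ ≤ ∑' α : A, μ (Aa α \ DB (HT t)) := measure_iUnion_le _
        _ ≤ ∑' α : A, 2 * c ^ 3 * ENNReal.ofReal (k t) *
              ∑' b : ↥(uu α), μ ((Metric.ball (b : X × ℝ).1 (b : X × ℝ).2 ∩ S₀) \ HT t) :=
            ENNReal.tsum_le_tsum hper
        _ = 2 * c ^ 3 * ENNReal.ofReal (k t) * ∑' α : A,
              ∑' b : ↥(uu α), μ ((Metric.ball (b : X × ℝ).1 (b : X × ℝ).2 ∩ S₀) \ HT t) :=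
            ENNReal.tsum_mul_left
        _ = 2 * c ^ 3 * ENNReal.ofReal (k t) * ∑' p : Σ α : A, ↥(uu α),
              μ ((Metric.ball (p.2 : X × ℝ).1 (p.2 : X × ℝ).2 ∩ S₀) \ HT t) := by
            rw [ENNReal.tsum_sigma']
        _ ≤ 2 * c ^ 3 * ENNReal.ofReal (k t) * μ Set.univ := mul_le_mul_right hglob _
        _ ≤ (1 + 2 * c ^ 3) * μ Set.univ * ENNReal.ofReal (k t) := by
            calc 2 * c ^ 3 * ENNReal.ofReal (k t) * μ Set.univ
                = 2 * c ^ 3 * μ Set.univ * ENNReal.ofReal (k t) := by ring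
              _ ≤ (1 + 2 * c ^ 3) * μ Set.univ * ENNReal.ofReal (k t) := by
                  gcongr
                  exact le_add_self
  -- Borel–Cantelli part
  set P : T → Set X := fun t => if t ∈ F then (∅ : Set X) else LS t \ DB (HT t) with hPdef
  have hPBC : μ {x : X | {t : T | x ∈ P t}.Infinite} = 0 := by
    rw [← Filter.cofinite.limsup_set_eq]
    refine measure_limsup_cofinite_eq_zero ?_
    have hb : ∀ t, μ (P t) ≤ (1 + 2 * c ^ 3) * μ Set.univ * ENNReal.ofReal (k t) := by
      intro t
      by_cases ht : t ∈ F
      · simp [hPdef, ht]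
      · simpa [hPdef, ht] using hkey t ht
    have hsum : ∑' t : T, ENNReal.ofReal (k t) ≠ ⊤ := by
      rw [← ENNReal.ofReal_tsum_of_nonneg (fun t => (hkpos t).le) hksum]
      exact ENNReal.ofReal_ne_top
    refine ne_top_of_le_ne_top ?_ (ENNReal.tsum_le_tsum hb)
    rw [ENNReal.tsum_mul_left]
    exact ENNReal.mul_ne_top
      (ENNReal.mul_ne_top
        (by simp [ENNReal.add_ne_top, ENNReal.mul_ne_top, ENNReal.pow_ne_top hctop])
        (measure_ne_top μ _)) hsum
  -- the tail unions of the homogeneous sets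
  obtain ⟨ι, hι⟩ := Countable.exists_injective_nat T
  set G : ℕ → Set X := fun N => ⋃ (t : T) (_ : N ≤ ι t), HT t with hGdef
  have hGmeas : ∀ N, MeasurableSet (G N) :=
    fun N => MeasurableSet.iUnion fun t => MeasurableSet.iUnion fun _ => hHTmeas t
  have hGanti : Antitone G := by
    intro m n hmn
    exact Set.iUnion_mono fun t => Set.iUnion_subset fun h => Set.subset_iUnion_of_subset
      (le_trans hmn h) subset_rfl
  have hGlim : Filter.Tendsto (μ ∘ G) Filter.atTop (nhds 0) := by
    have hcap : μ (⋂ N, G N) = 0 := by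
      refine measure_mono_null ?_ (hH ψ hψΦ)
      intro x hx
      simp only [Set.mem_iInter] at hx
      simp only [Set.mem_setOf_eq]
      intro hfin
      obtain ⟨N, hN⟩ : ∃ N : ℕ, ∀ t, x ∈ HT t → ι t < N := by
        have : ({t : T | x ∈ HT t}).Finite := hfin
        obtain ⟨N, hN⟩ := (this.image ι).bddAbove
        exact ⟨N + 1, fun t ht => Nat.lt_succ_of_le (hN (Set.mem_image_of_mem ι ht))⟩
      obtain ⟨t, ht⟩ := Set.mem_iUnion.1 (hx N)
      obtain ⟨hNt, hxt⟩ := Set.mem_iUnion.1 ht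
      exact absurd (hN t hxt) (not_lt.2 hNt)
    have := tendsto_measure_iInter_atTop (μ := μ)
      (fun N => (hGmeas N).nullMeasurableSet) hGanti ⟨0, measure_ne_top μ _⟩
    rwa [hcap] at this
  -- main inclusion
  have hmain : {x : X | {t : T | x ∈ ⋃ α : A, I t α (φ t)}.Infinite} ⊆
      S₀ᶜ ∪ {x : X | {t : T | x ∈ HT t}.Infinite} ∪ {x : X | {t : T | x ∈ P t}.Infinite} ∪
      ⋂ N, DB (G N) := by
    intro x hx
    simp only [Set.mem_setOf_eq] at hx
    simp only [Set.mem_union, Set.mem_setOf_eq, Set.mem_compl_iff]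
    by_cases hxS : x ∈ S₀
    swap
    · tauto
    by_cases hxH : {t : T | x ∈ HT t}.Infinite
    · tauto
    by_cases hxP : {t : T | x ∈ P t}.Infinite
    · tauto
    refine Or.inr (Set.mem_iInter.2 fun N => ?_)
    have hLx : {t : T | t ∉ F ∧ x ∈ LS t}.Infinite := by
      refine Set.Infinite.mono ?_
        ((hx.diff (Set.Finite.union (Set.not_infinite.1 hxH) hFfin)))
      intro t ht
      obtain ⟨ht1, ht2⟩ := ht
      rw [Set.mem_union] at ht2
      push_neg at ht2
      exact ⟨ht2.2, ⟨⟨hxS, ht1⟩, ht2.1⟩⟩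
    have hQx : {t : T | t ∉ F ∧ x ∈ DB (HT t)}.Infinite := by
      refine Set.Infinite.mono ?_ (hLx.diff (Set.not_infinite.1 hxP))
      intro t ht
      obtain ⟨⟨htF, htL⟩, htP⟩ := ht
      refine ⟨htF, ?_⟩
      by_contra h
      exact htP (by simp only [Set.mem_setOf_eq, hPdef, if_neg htF]; exact ⟨htL, h⟩)
    have hfinlt : {t : T | ι t < N}.Finite :=
      Set.Finite.preimage (Function.Injective.injOn hι) (Set.finite_Iio N)
    obtain ⟨t, ht⟩ := (hQx.diff hfinlt).nonempty
    obtain ⟨⟨htF, htDB⟩, htN⟩ := ht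
    have hιt : N ≤ ι t := not_lt.1 htN
    obtain ⟨hxSS, ρ, hρ1, hρ2, hρ3⟩ := htDB
    refine ⟨hxSS, ρ, hρ1, hρ2, le_trans hρ3 (mul_le_mul_right (measure_mono ?_) _)⟩
    refine Set.inter_subset_inter_right _ ?_
    intro y hy
    exact Set.mem_iUnion.2 ⟨t, Set.mem_iUnion.2 ⟨hιt, hy⟩⟩
  -- conclusion
  have hDBcap : μ (⋂ N, DB (G N)) = 0 := by
    refine le_antisymm ?_ (zero_le)
    have hb : ∀ N, μ (⋂ M, DB (G M)) ≤ 2 * c ^ 5 * μ (G N) :=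
      fun N => le_trans (measure_mono (Set.iInter_subset _ N)) (hDBbound _ (hGmeas N))
    have hlim : Filter.Tendsto (fun N => 2 * c ^ 5 * μ (G N)) Filter.atTop (nhds 0) := by
      have hane : (2 * c ^ 5 : ENNReal) ≠ ⊤ :=
        ENNReal.mul_ne_top (by simp) (ENNReal.pow_ne_top hctop)
      have := ENNReal.Tendsto.const_mul (a := 2 * c ^ 5) hGlim (Or.inr hane)
      simpa using this
    exact ge_of_tendsto' hlim hb
  have hHBC : μ {x : X | {t : T | x ∈ HT t}.Infinite} = 0 := hH ψ hψΦ
  refine le_antisymm ?_ (zero_le)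
  calc μ {x : X | {t : T | x ∈ ⋃ α : A, I t α (φ t)}.Infinite}
      ≤ μ (S₀ᶜ ∪ {x : X | {t : T | x ∈ HT t}.Infinite} ∪
          {x : X | {t : T | x ∈ P t}.Infinite} ∪ ⋂ N, DB (G N)) := measure_mono hmain
    _ ≤ μ (S₀ᶜ ∪ {x : X | {t : T | x ∈ HT t}.Infinite} ∪
          {x : X | {t : T | x ∈ P t}.Infinite}) + μ (⋂ N, DB (G N)) := measure_union_le _ _
    _ ≤ (μ (S₀ᶜ ∪ {x : X | {t : T | x ∈ HT t}.Infinite}) +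
          μ {x : X | {t : T | x ∈ P t}.Infinite}) + μ (⋂ N, DB (G N)) := by
        gcongr
        exact measure_union_le _ _
    _ ≤ ((μ S₀ᶜ + μ {x : X | {t : T | x ∈ HT t}.Infinite}) +
          μ {x : X | {t : T | x ∈ P t}.Infinite}) + μ (⋂ N, DB (G N)) := by
        gcongr
        exact measure_union_le _ _
    _ = 0 := by rw [hS₀null, hHBC, hPBC, hDBcap]; simp
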